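/- For the Exp3 algorithm run over a finite set of K actions with rewards in [0,1], horizon T, and exploration parameter γ = min{1, sqrt(K ln K / ((e-1) T))}, the expected static regret against the best fixed action in hindsight is at most 2 sqrt(e-1) · sqrt(T K ln K). -/

import Mathlib

set_option maxHeartbeats 1000000
open Finset Real Nat




open Finset Real

/-- Exp3 weights, indexed by the *reversed* history of played actions
(most recent action first). `exp3w f γ h x` is the weight of action `x`
after the (reversed) history `h` has been played. -/
noncomputable def exp3w {X : Type*} [Fintype X] [DecidableEq X] (f : ℕ → X → ℝ) (γ : ℝ) :
    List X → X → ℝ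
  | [] => fun _ => 1
  | a :: h => fun x =>
      exp3w f γ h x *
        Real.exp (γ * (if x = a then
            f h.length a /
              (γ / (Fintype.card X : ℝ) +
                (1 - γ) * exp3w f γ h a / ∑ x' : X, exp3w f γ h x')
          else 0) / (Fintype.card X : ℝ))

/-- Exp3 sampling distribution after (reversed) history `h`. -/
noncomputable def exp3y {X : Type*} [Fintype X] [DecidableEq X] (f : ℕ → X → ℝ) (γ : ℝ)
    (h : List X) (x : X) : ℝ :=
  γ / (Fintype.card X : ℝ) + (1 - γ) * exp3w f γ h x / ∑ x' : X, exp3w f γ h x'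

/-- Expected cumulative reward of Exp3 for the next `n` rounds, starting from
(reversed) history `h`. -/
noncomputable def exp3EV {X : Type*} [Fintype X] [DecidableEq X] (f : ℕ → X → ℝ) (γ : ℝ) :
    ℕ → List X → ℝ
  | 0, _ => 0
  | n + 1, h => ∑ x : X, exp3y f γ h x * (f h.length x + exp3EV f γ n (x :: h))


lemma real_exp_tsum (z : ℝ) : Real.exp z = ∑' n : ℕ, z ^ n / n ! := by
  rw [Real.exp_eq_exp_ℝ, NormedSpace.exp_eq_tsum_div]

lemma exp_quad_bound {z : ℝ} (h0 : 0 ≤ z) (h1 : z ≤ 1) :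
    Real.exp z ≤ 1 + z + (Real.exp 1 - 2) * z ^ 2 := by
  have hs : ∀ w : ℝ, Summable (fun n : ℕ => w ^ n / n !) := fun w =>
    Real.summable_pow_div_factorial w
  have key : ∀ w : ℝ, Real.exp w = 1 + w + ∑' n : ℕ, w ^ (n + 2) / (n + 2)! := by
    intro w
    rw [real_exp_tsum w, ← Summable.sum_add_tsum_nat_add 2 (hs w)]
    norm_num [Finset.sum_range_succ]
  have h2 : ∑' n : ℕ, z ^ (n + 2) / (n + 2)! ≤ ∑' n : ℕ, z ^ 2 * ((1:ℝ) ^ (n + 2) / (n + 2)!) := by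
    apply Summable.tsum_le_tsum
    · intro n
      rw [one_pow, mul_one_div]
      have hc : (0:ℝ) < (n+2)! := by positivity
      exact div_le_div_of_nonneg_right (pow_le_pow_of_le_one h0 h1 (by omega)) hc.le
    · exact (hs z).comp_injective (fun a b => by omega)
    · exact ((hs 1).comp_injective (fun a b => by omega)).mul_left _
  have h3 : ∑' n : ℕ, z ^ 2 * ((1:ℝ) ^ (n + 2) / (n + 2)!) = z ^ 2 * (Real.exp 1 - 2) := by
    rw [tsum_mul_left]
    have h4 : ∑' n : ℕ, (1:ℝ) ^ (n + 2) / (n + 2)! = Real.exp 1 - 2 := by linarith [key 1]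
    rw [h4]
  rw [h3] at h2
  have := key z
  nlinarith [h2]


/-- Expectation of a history functional under the Exp3 process. -/
noncomputable def exp3Ex {X : Type*} [Fintype X] [DecidableEq X] (f : ℕ → X → ℝ) (γ : ℝ) :
    ℕ → List X → (List X → ℝ) → ℝ
  | 0, h, F => F h
  | n + 1, h, F => ∑ x : X, exp3y f γ h x * exp3Ex f γ n (x :: h) F

section lemmas
variable {X : Type*} [Fintype X] [DecidableEq X] (f : ℕ → X → ℝ) (γ : ℝ)

lemma exp3w_cons (a : X) (h : List X) (x : X) :
    exp3w f γ (a :: h) x = exp3w f γ h x *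
      Real.exp (γ * (if x = a then f h.length a / exp3y f γ h a else 0) /
        (Fintype.card X : ℝ)) := by
  simp [exp3w, exp3y]

lemma exp3w_pos (h : List X) (x : X) : 0 < exp3w f γ h x := by
  induction h with
  | nil => simp [exp3w]
  | cons a h ih => rw [exp3w_cons]; positivity

lemma exp3W_pos [Nonempty X] (h : List X) : 0 < ∑ x' : X, exp3w f γ h x' :=
  Finset.sum_pos (fun x _ => exp3w_pos f γ h x) univ_nonempty

variable [Nonempty X]

lemma exp3y_ge (hγ0 : 0 ≤ γ) (hγ1 : γ ≤ 1) (h : List X) (x : X) :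
    γ / (Fintype.card X : ℝ) ≤ exp3y f γ h x := by
  have h1 := exp3w_pos f γ h x
  have h2 := exp3W_pos f γ h
  have : 0 ≤ (1 - γ) * exp3w f γ h x / ∑ x' : X, exp3w f γ h x' :=
    div_nonneg (mul_nonneg (by linarith) h1.le) h2.le
  unfold exp3y; linarith

lemma exp3y_nonneg (hγ0 : 0 ≤ γ) (hγ1 : γ ≤ 1) (h : List X) (x : X) :
    0 ≤ exp3y f γ h x := by
  have hK : (0:ℝ) < (Fintype.card X : ℝ) := by
    exact_mod_cast Fintype.card_pos
  have := exp3y_ge f γ hγ0 hγ1 h x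
  have : (0:ℝ) ≤ γ / (Fintype.card X : ℝ) := by positivity
  linarith [exp3y_ge f γ hγ0 hγ1 h x]

lemma exp3y_pos (hγ0 : 0 < γ) (hγ1 : γ ≤ 1) (h : List X) (x : X) :
    0 < exp3y f γ h x := by
  have hK : (0:ℝ) < (Fintype.card X : ℝ) := by exact_mod_cast Fintype.card_pos
  have : (0:ℝ) < γ / (Fintype.card X : ℝ) := by positivity
  linarith [exp3y_ge f γ hγ0.le hγ1 h x]

lemma exp3y_sum (h : List X) : ∑ x : X, exp3y f γ h x = 1 := by
  have h2 := exp3W_pos f γ h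
  have hK : (0:ℝ) < (Fintype.card X : ℝ) := by exact_mod_cast Fintype.card_pos
  unfold exp3y
  rw [Finset.sum_add_distrib, Finset.sum_const]
  rw [← Finset.sum_div, ← Finset.mul_sum]
  field_simp
  have : (Fintype.card X : ℝ) * (γ / Fintype.card X) = γ := by field_simp
  rw [Finset.card_univ, nsmul_eq_mul]; linarith

lemma exp3EV_le (hf : ∀ t x, f t x ∈ Set.Icc (0:ℝ) 1) (hγ0 : 0 ≤ γ) (hγ1 : γ ≤ 1) :
    ∀ (n : ℕ) (h : List X), exp3EV f γ n h ≤ n := by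
  intro n
  induction n with
  | zero => intro h; simp [exp3EV]
  | succ n ih =>
    intro h
    have : exp3EV f γ (n+1) h = ∑ x : X, exp3y f γ h x * (f h.length x + exp3EV f γ n (x :: h)) := rfl
    rw [this]
    calc ∑ x : X, exp3y f γ h x * (f h.length x + exp3EV f γ n (x :: h))
        ≤ ∑ x : X, exp3y f γ h x * (1 + n) := by
          apply Finset.sum_le_sum
          intro x _
          apply mul_le_mul_of_nonneg_left _ (exp3y_nonneg f γ hγ0 hγ1 h x)
          have := (hf h.length x).2
          linarith [ih (x :: h)]
      _ = (1 + n) := by rw [← Finset.sum_mul, exp3y_sum f γ h, one_mul]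
      _ = ((n+1 : ℕ) : ℝ) := by push_cast; ring

lemma exp3EV_nonneg (hf : ∀ t x, f t x ∈ Set.Icc (0:ℝ) 1) (hγ0 : 0 ≤ γ) (hγ1 : γ ≤ 1) :
    ∀ (n : ℕ) (h : List X), 0 ≤ exp3EV f γ n h := by
  intro n
  induction n with
  | zero => intro h; simp [exp3EV]
  | succ n ih =>
    intro h
    have heq : exp3EV f γ (n+1) h = ∑ x : X, exp3y f γ h x * (f h.length x + exp3EV f γ n (x :: h)) := rfl
    rw [heq]
    apply Finset.sum_nonneg
    intro x _
    have := (hf h.length x).1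
    have := ih (x :: h)
    have := exp3y_nonneg f γ hγ0 hγ1 h x
    positivity

lemma exp3Ex_mono (hγ0 : 0 ≤ γ) (hγ1 : γ ≤ 1) (F G : List X → ℝ)
    (hFG : ∀ h', F h' ≤ G h') :
    ∀ (n : ℕ) (h : List X), exp3Ex f γ n h F ≤ exp3Ex f γ n h G := by
  intro n
  induction n with
  | zero => intro h; exact hFG h
  | succ n ih =>
    intro h
    show ∑ x : X, exp3y f γ h x * exp3Ex f γ n (x :: h) F ≤
      ∑ x : X, exp3y f γ h x * exp3Ex f γ n (x :: h) G
    apply Finset.sum_le_sum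
    intro x _
    exact mul_le_mul_of_nonneg_left (ih (x :: h)) (exp3y_nonneg f γ hγ0 hγ1 h x)

/-- Lemma A: expected log-weight of a fixed action. -/
lemma exp3_lemmaA (hγ0 : 0 < γ) (hγ1 : γ ≤ 1) (z : X) :
    ∀ (n : ℕ) (h : List X),
      exp3Ex f γ n h (fun h' => Real.log (exp3w f γ h' z)) =
        Real.log (exp3w f γ h z) +
          γ / (Fintype.card X : ℝ) * ∑ i ∈ Finset.range n, f (h.length + i) z := by
  have hK : (0:ℝ) < (Fintype.card X : ℝ) := by exact_mod_cast Fintype.card_pos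
  intro n
  induction n with
  | zero => intro h; simp [exp3Ex]
  | succ n ih =>
    intro h
    have hyne : exp3y f γ h z ≠ 0 := (exp3y_pos f γ hγ0 hγ1 h z).ne'
    have hlog : ∀ x : X, Real.log (exp3w f γ (x :: h) z) =
        Real.log (exp3w f γ h z) +
          γ * (if z = x then f h.length x / exp3y f γ h x else 0) / (Fintype.card X : ℝ) := by
      intro x
      rw [exp3w_cons, Real.log_mul (exp3w_pos f γ h z).ne' (Real.exp_ne_zero _), Real.log_exp]
    show ∑ x : X, exp3y f γ h x * exp3Ex f γ n (x :: h)
        (fun h' => Real.log (exp3w f γ h' z)) = _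
    have step1 : ∀ x : X, exp3Ex f γ n (x :: h) (fun h' => Real.log (exp3w f γ h' z)) =
        Real.log (exp3w f γ h z) +
          γ * (if z = x then f h.length x / exp3y f γ h x else 0) / (Fintype.card X : ℝ) +
          γ / (Fintype.card X : ℝ) * ∑ i ∈ Finset.range n, f (h.length + 1 + i) z := by
      intro x
      rw [ih (x :: h), hlog x]
      simp [List.length_cons]
    calc ∑ x : X, exp3y f γ h x * exp3Ex f γ n (x :: h)
          (fun h' => Real.log (exp3w f γ h' z))
        = ∑ x : X, exp3y f γ h x *
            (Real.log (exp3w f γ h z) +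
              γ / (Fintype.card X : ℝ) * ∑ i ∈ Finset.range n, f (h.length + 1 + i) z) +
          ∑ x : X, exp3y f γ h x *
            (γ * (if z = x then f h.length x / exp3y f γ h x else 0) / (Fintype.card X : ℝ)) := by
          rw [← Finset.sum_add_distrib]
          apply Finset.sum_congr rfl
          intro x _
          rw [step1 x]; ring
      _ = (Real.log (exp3w f γ h z) +
              γ / (Fintype.card X : ℝ) * ∑ i ∈ Finset.range n, f (h.length + 1 + i) z) +
          γ * f h.length z / (Fintype.card X : ℝ) := by
          congr 1
          · rw [← Finset.sum_mul, exp3y_sum f γ h, one_mul]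
          · have : ∀ x : X, exp3y f γ h x *
                (γ * (if z = x then f h.length x / exp3y f γ h x else 0) / (Fintype.card X : ℝ)) =
                (if z = x then exp3y f γ h x * (γ * (f h.length x / exp3y f γ h x) /
                  (Fintype.card X : ℝ)) else 0) := by
              intro x
              by_cases hzx : z = x <;> simp [hzx]
            rw [Finset.sum_congr rfl (fun x _ => this x), Finset.sum_ite_eq]
            simp only [Finset.mem_univ, if_pos]
            field_simp
      _ = _ := by
          rw [Finset.sum_range_succ']
          have : ∀ i ∈ Finset.range n, f (h.length + 1 + i) z = f (h.length + (i + 1)) z := by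
            intro i _
            congr 1
            omega
          rw [Finset.sum_congr rfl this]
          simp only [Nat.add_zero]
          ring

/-- One-step potential bound. -/
lemma exp3_step (hγ0 : 0 < γ) (hγ1 : γ < 1)
    (hf : ∀ t x, f t x ∈ Set.Icc (0:ℝ) 1) (h : List X) (a : X) :
    Real.log (∑ x' : X, exp3w f γ (a :: h) x') ≤
      Real.log (∑ x' : X, exp3w f γ h x') +
        γ * f h.length a / ((Fintype.card X : ℝ) * (1 - γ)) +
        (Real.exp 1 - 2) * γ ^ 2 * (f h.length a) ^ 2 /
          ((Fintype.card X : ℝ) ^ 2 * (1 - γ) * exp3y f γ h a) := by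
  have he2 : (0:ℝ) ≤ Real.exp 1 - 2 := by
    have := Real.exp_one_gt_d9; norm_num at this ⊢; linarith
  set K := (Fintype.card X : ℝ) with hKdef
  have hK : (0:ℝ) < K := by rw [hKdef]; exact_mod_cast Fintype.card_pos
  set W := ∑ x' : X, exp3w f γ h x' with hWdef
  have hWpos : 0 < W := exp3W_pos f γ h
  set ya := exp3y f γ h a with hya
  have hyapos : 0 < ya := exp3y_pos f γ hγ0 hγ1.le h a
  have hyage : γ / K ≤ ya := exp3y_ge f γ hγ0.le hγ1.le h a
  have h1γ : (0:ℝ) < 1 - γ := by linarith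
  have hfa0 := (hf h.length a).1
  have hfa1 := (hf h.length a).2
  set F := f h.length a with hF
  set c := γ * (F / ya) / K with hc
  have hc0 : 0 ≤ c := by rw [hc]; positivity
  have hc1 : c ≤ 1 := by
    have h1 : γ ≤ ya * K := (div_le_iff₀ hK).mp hyage
    rw [hc, div_le_one hK, mul_div_assoc']
    rw [div_le_iff₀ hyapos]
    nlinarith
  have hcons : ∀ x : X, exp3w f γ (a::h) x =
      exp3w f γ h x * Real.exp (if x = a then c else 0) := by
    intro x
    rw [exp3w_cons]
    congr 1
    by_cases hxa : x = a <;> simp [hxa, hc, ← hya, ← hF, mul_div_assoc] <;> exact Or.inl rfl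
  have hWle : ∑ x' : X, exp3w f γ (a::h) x' ≤
      W + exp3w f γ h a * (c + (Real.exp 1 - 2) * c ^ 2) := by
    calc ∑ x' : X, exp3w f γ (a::h) x'
        ≤ ∑ x' : X, (exp3w f γ h x' +
            (if x' = a then exp3w f γ h a * (c + (Real.exp 1 - 2) * c ^ 2) else 0)) := by
          apply Finset.sum_le_sum
          intro x _
          rw [hcons x]
          by_cases hxa : x = a
          · subst hxa
            rw [if_pos rfl, if_pos rfl]
            have hq := exp_quad_bound hc0 hc1
            nlinarith [exp3w_pos f γ h x]
          · simp [hxa]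
      _ = W + exp3w f γ h a * (c + (Real.exp 1 - 2) * c ^ 2) := by
          rw [Finset.sum_add_distrib, Finset.sum_ite_eq' Finset.univ a]
          simp [hWdef]
  have hW'pos : 0 < ∑ x' : X, exp3w f γ (a::h) x' := exp3W_pos f γ (a::h)
  have hlog : Real.log (∑ x' : X, exp3w f γ (a::h) x') - Real.log W ≤
      (exp3w f γ h a / W) * (c + (Real.exp 1 - 2) * c ^ 2) := by
    rw [← Real.log_div hW'pos.ne' hWpos.ne']
    have hld := Real.log_le_sub_one_of_pos (div_pos hW'pos hWpos)
    have h2' : (∑ x' : X, exp3w f γ (a::h) x') / W ≤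
        (W + exp3w f γ h a * (c + (Real.exp 1 - 2) * c ^ 2)) / W :=
      div_le_div_of_nonneg_right hWle hWpos.le
    have h2'' : (W + exp3w f γ h a * (c + (Real.exp 1 - 2) * c ^ 2)) / W =
        1 + (exp3w f γ h a / W) * (c + (Real.exp 1 - 2) * c ^ 2) := by
      field_simp
    rw [h2''] at h2'
    linarith
  have hp : ya = γ / K + (1 - γ) * exp3w f γ h a / W := by
    rw [hya, hKdef, hWdef]; rfl
  have hple : exp3w f γ h a / W ≤ ya / (1 - γ) := by
    rw [le_div_iff₀ h1γ]
    have hgk : (0:ℝ) ≤ γ / K := by positivity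
    have : (1 - γ) * exp3w f γ h a / W = ya - γ / K := by rw [hp]; ring
    calc exp3w f γ h a / W * (1 - γ) = (1 - γ) * exp3w f γ h a / W := by ring
      _ = ya - γ / K := this
      _ ≤ ya := by linarith
  have hfinal : (exp3w f γ h a / W) * (c + (Real.exp 1 - 2) * c ^ 2) ≤
      γ * F / (K * (1 - γ)) + (Real.exp 1 - 2) * γ ^ 2 * F ^ 2 / (K ^ 2 * (1 - γ) * ya) := by
    have hcc : 0 ≤ c + (Real.exp 1 - 2) * c ^ 2 := by positivity
    have h1 : (exp3w f γ h a / W) * (c + (Real.exp 1 - 2) * c ^ 2) ≤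
        (ya / (1 - γ)) * (c + (Real.exp 1 - 2) * c ^ 2) :=
      mul_le_mul_of_nonneg_right hple hcc
    have h2 : (ya / (1 - γ)) * c = γ * F / (K * (1 - γ)) := by
      rw [hc]; field_simp
    have h3 : (ya / (1 - γ)) * ((Real.exp 1 - 2) * c ^ 2) =
        (Real.exp 1 - 2) * γ ^ 2 * F ^ 2 / (K ^ 2 * (1 - γ) * ya) := by
      rw [hc]; field_simp
    calc (exp3w f γ h a / W) * (c + (Real.exp 1 - 2) * c ^ 2)
        ≤ (ya / (1 - γ)) * c + (ya / (1 - γ)) * ((Real.exp 1 - 2) * c ^ 2) := by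
          rw [← mul_add]; exact h1
      _ = _ := by rw [h2, h3]
  linarith [hlog, hfinal]

/-- Lemma B: expected final log partition function bound. -/
lemma exp3_lemmaB (hγ0 : 0 < γ) (hγ1 : γ < 1)
    (hf : ∀ t x, f t x ∈ Set.Icc (0:ℝ) 1) :
    ∀ (n : ℕ) (h : List X),
      exp3Ex f γ n h (fun h' => Real.log (∑ x' : X, exp3w f γ h' x')) ≤
        Real.log (∑ x' : X, exp3w f γ h x') +
          γ / ((Fintype.card X : ℝ) * (1 - γ)) * exp3EV f γ n h +
          n * ((Real.exp 1 - 2) * γ ^ 2 / ((Fintype.card X : ℝ) * (1 - γ))) := by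
  have he2 : (0:ℝ) ≤ Real.exp 1 - 2 := by
    have := Real.exp_one_gt_d9; norm_num at this ⊢; linarith
  have hK : (0:ℝ) < (Fintype.card X : ℝ) := by exact_mod_cast Fintype.card_pos
  have h1γ : (0:ℝ) < 1 - γ := by linarith
  intro n
  induction n with
  | zero => intro h; simp [exp3Ex, exp3EV]
  | succ n ih =>
    intro h
    have hyne : ∀ a : X, exp3y f γ h a ≠ 0 := fun a => (exp3y_pos f γ hγ0 hγ1.le h a).ne'
    have key : ∀ a : X, exp3y f γ h a *
        exp3Ex f γ n (a :: h) (fun h' => Real.log (∑ x' : X, exp3w f γ h' x')) ≤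
        exp3y f γ h a * (Real.log (∑ x' : X, exp3w f γ h x') +
          γ * f h.length a / ((Fintype.card X : ℝ) * (1 - γ)) +
          (Real.exp 1 - 2) * γ ^ 2 * (f h.length a) ^ 2 /
            ((Fintype.card X : ℝ) ^ 2 * (1 - γ) * exp3y f γ h a) +
          γ / ((Fintype.card X : ℝ) * (1 - γ)) * exp3EV f γ n (a :: h) +
          n * ((Real.exp 1 - 2) * γ ^ 2 / ((Fintype.card X : ℝ) * (1 - γ)))) := by
      intro a
      apply mul_le_mul_of_nonneg_left _ (exp3y_nonneg f γ hγ0.le hγ1.le h a)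
      have h1 := ih (a :: h)
      have h2 := exp3_step f γ hγ0 hγ1 hf h a
      linarith
    have hEV : exp3EV f γ (n+1) h =
        ∑ a : X, exp3y f γ h a * (f h.length a + exp3EV f γ n (a :: h)) := rfl
    have hsplit : ∑ a : X, exp3y f γ h a * (Real.log (∑ x' : X, exp3w f γ h x') +
          γ * f h.length a / ((Fintype.card X : ℝ) * (1 - γ)) +
          (Real.exp 1 - 2) * γ ^ 2 * (f h.length a) ^ 2 /
            ((Fintype.card X : ℝ) ^ 2 * (1 - γ) * exp3y f γ h a) +
          γ / ((Fintype.card X : ℝ) * (1 - γ)) * exp3EV f γ n (a :: h) +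
          n * ((Real.exp 1 - 2) * γ ^ 2 / ((Fintype.card X : ℝ) * (1 - γ)))) =
        (∑ a : X, exp3y f γ h a) * (Real.log (∑ x' : X, exp3w f γ h x') +
          n * ((Real.exp 1 - 2) * γ ^ 2 / ((Fintype.card X : ℝ) * (1 - γ)))) +
        γ / ((Fintype.card X : ℝ) * (1 - γ)) *
          (∑ a : X, exp3y f γ h a * (f h.length a + exp3EV f γ n (a :: h))) +
        ∑ a : X, (Real.exp 1 - 2) * γ ^ 2 * (f h.length a) ^ 2 /
            ((Fintype.card X : ℝ) ^ 2 * (1 - γ)) := by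
      rw [Finset.sum_mul, Finset.mul_sum, ← Finset.sum_add_distrib, ← Finset.sum_add_distrib]
      apply Finset.sum_congr rfl
      intro a _
      have hcancel : exp3y f γ h a * ((Real.exp 1 - 2) * γ ^ 2 * (f h.length a) ^ 2 /
            ((Fintype.card X : ℝ) ^ 2 * (1 - γ) * exp3y f γ h a)) =
          (Real.exp 1 - 2) * γ ^ 2 * (f h.length a) ^ 2 /
            ((Fintype.card X : ℝ) ^ 2 * (1 - γ)) := by
        calc exp3y f γ h a * ((Real.exp 1 - 2) * γ ^ 2 * (f h.length a) ^ 2 /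
                ((Fintype.card X : ℝ) ^ 2 * (1 - γ) * exp3y f γ h a))
            = exp3y f γ h a * ((Real.exp 1 - 2) * γ ^ 2 * (f h.length a) ^ 2) /
                (exp3y f γ h a * ((Fintype.card X : ℝ) ^ 2 * (1 - γ))) := by ring
          _ = _ := mul_div_mul_left _ _ (hyne a)
      calc exp3y f γ h a * (Real.log (∑ x' : X, exp3w f γ h x') +
              γ * f h.length a / ((Fintype.card X : ℝ) * (1 - γ)) +
              (Real.exp 1 - 2) * γ ^ 2 * (f h.length a) ^ 2 /
                ((Fintype.card X : ℝ) ^ 2 * (1 - γ) * exp3y f γ h a) +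
              γ / ((Fintype.card X : ℝ) * (1 - γ)) * exp3EV f γ n (a :: h) +
              n * ((Real.exp 1 - 2) * γ ^ 2 / ((Fintype.card X : ℝ) * (1 - γ))))
          = exp3y f γ h a * (Real.log (∑ x' : X, exp3w f γ h x') +
              n * ((Real.exp 1 - 2) * γ ^ 2 / ((Fintype.card X : ℝ) * (1 - γ)))) +
            γ / ((Fintype.card X : ℝ) * (1 - γ)) *
              (exp3y f γ h a * (f h.length a + exp3EV f γ n (a :: h))) +
            exp3y f γ h a * ((Real.exp 1 - 2) * γ ^ 2 * (f h.length a) ^ 2 /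
              ((Fintype.card X : ℝ) ^ 2 * (1 - γ) * exp3y f γ h a)) := by ring
        _ = _ := by rw [hcancel]
    have hQ : ∑ a : X, (Real.exp 1 - 2) * γ ^ 2 * (f h.length a) ^ 2 /
          ((Fintype.card X : ℝ) ^ 2 * (1 - γ)) ≤
        (Real.exp 1 - 2) * γ ^ 2 / ((Fintype.card X : ℝ) * (1 - γ)) := by
      have hsum : ∑ a : X, (Real.exp 1 - 2) * γ ^ 2 * (f h.length a) ^ 2 /
            ((Fintype.card X : ℝ) ^ 2 * (1 - γ)) ≤
          ∑ a : X, (Real.exp 1 - 2) * γ ^ 2 * 1 / ((Fintype.card X : ℝ) ^ 2 * (1 - γ)) := by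
        apply Finset.sum_le_sum
        intro a _
        apply div_le_div_of_nonneg_right _ (by positivity)
        have h1 := (hf h.length a).1
        have h2 := (hf h.length a).2
        have hsq : (f h.length a) ^ 2 ≤ 1 := by nlinarith
        exact mul_le_mul_of_nonneg_left hsq (by positivity)
      have hconst : ∑ a : X, (Real.exp 1 - 2) * γ ^ 2 * 1 /
            ((Fintype.card X : ℝ) ^ 2 * (1 - γ)) =
          (Real.exp 1 - 2) * γ ^ 2 / ((Fintype.card X : ℝ) * (1 - γ)) := by
        rw [Finset.sum_const, Finset.card_univ, nsmul_eq_mul]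
        field_simp
      linarith
    calc ∑ a : X, exp3y f γ h a *
          exp3Ex f γ n (a :: h) (fun h' => Real.log (∑ x' : X, exp3w f γ h' x'))
        ≤ ∑ a : X, exp3y f γ h a * (Real.log (∑ x' : X, exp3w f γ h x') +
            γ * f h.length a / ((Fintype.card X : ℝ) * (1 - γ)) +
            (Real.exp 1 - 2) * γ ^ 2 * (f h.length a) ^ 2 /
              ((Fintype.card X : ℝ) ^ 2 * (1 - γ) * exp3y f γ h a) +
            γ / ((Fintype.card X : ℝ) * (1 - γ)) * exp3EV f γ n (a :: h) +
            n * ((Real.exp 1 - 2) * γ ^ 2 / ((Fintype.card X : ℝ) * (1 - γ)))) :=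
          Finset.sum_le_sum (fun a _ => key a)
      _ ≤ Real.log (∑ x' : X, exp3w f γ h x') +
            γ / ((Fintype.card X : ℝ) * (1 - γ)) * exp3EV f γ (n+1) h +
            (n+1 : ℕ) * ((Real.exp 1 - 2) * γ ^ 2 / ((Fintype.card X : ℝ) * (1 - γ))) := by
          rw [hsplit, exp3y_sum f γ h, one_mul, hEV]
          push_cast
          have hd : (0:ℝ) ≤ (Real.exp 1 - 2) * γ ^ 2 / ((Fintype.card X : ℝ) * (1 - γ)) := by
            positivity
          linarith [hQ]

end lemmas


/-- The Exp3 algorithm with `γ = min {1, √(K ln K / ((e-1) T))}` has expected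
static regret at most `2 √(e-1) · √(T K ln K)` against any fixed action. -/
theorem exp3_regret_bound {X : Type*} [Fintype X] [DecidableEq X] [Nonempty X]
    (f : ℕ → X → ℝ) (T : ℕ) (hT : 0 < T)
    (hf : ∀ t x, f t x ∈ Set.Icc (0 : ℝ) 1)
    (γ : ℝ)
    (hγ : γ = min 1 (Real.sqrt ((Fintype.card X : ℝ) * Real.log (Fintype.card X) /
      ((Real.exp 1 - 1) * T)))) :
    ∀ x : X,
      (∑ t ∈ Finset.range T, f t x) - exp3EV f γ T [] ≤
        2 * Real.sqrt (Real.exp 1 - 1) *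
          Real.sqrt ((T : ℝ) * (Fintype.card X : ℝ) * Real.log (Fintype.card X)) := by
  intro x
  have hT' : (0:ℝ) < T := by exact_mod_cast hT
  have he1 : (0:ℝ) < Real.exp 1 - 1 := by
    nlinarith [Real.exp_one_gt_d9]
  have he2 : (0:ℝ) ≤ Real.exp 1 - 2 := by
    nlinarith [Real.exp_one_gt_d9]
  have hKpos : (0:ℝ) < (Fintype.card X : ℝ) := by exact_mod_cast Fintype.card_pos
  have hγ0 : 0 ≤ γ := by
    rw [hγ]; exact le_min zero_le_one (Real.sqrt_nonneg _)
  have hγ1 : γ ≤ 1 := by rw [hγ]; exact min_le_left _ _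
  have hS : (∑ t ∈ Finset.range T, f t x) ≤ T := by
    calc ∑ t ∈ Finset.range T, f t x ≤ ∑ _t ∈ Finset.range T, (1:ℝ) :=
          Finset.sum_le_sum (fun t _ => (hf t x).2)
      _ = T := by simp
  rcases eq_or_lt_of_le (show 1 ≤ Fintype.card X from Fintype.card_pos) with hcard | hcard
  · -- K = 1
    obtain ⟨z, hz⟩ := Fintype.card_eq_one_iff.mp hcard.symm
    have huniv : (Finset.univ : Finset X) = {x} := by
      apply Finset.eq_singleton_iff_unique_mem.mpr
      exact ⟨Finset.mem_univ x, fun y _ => by rw [hz y, hz x]⟩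
    have hEV : ∀ (n : ℕ) (h : List X),
        exp3EV f γ n h = ∑ i ∈ Finset.range n, f (h.length + i) x := by
      intro n
      induction n with
      | zero => intro h; simp [exp3EV]
      | succ n ih =>
        intro h
        have hy1 : exp3y f γ h x = 1 := by
          unfold exp3y
          rw [huniv, Finset.sum_singleton]
          have hw := (exp3w_pos f γ h x).ne'
          rw [mul_div_assoc, div_self hw, mul_one, ← hcard]
          push_cast
          ring
        have : exp3EV f γ (n+1) h =
            ∑ a : X, exp3y f γ h a * (f h.length a + exp3EV f γ n (a :: h)) := rfl
        rw [this, huniv, Finset.sum_singleton, hy1, one_mul, ih (x :: h)]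
        rw [Finset.sum_range_succ']
        have hc : ∀ i ∈ Finset.range n, f ((x :: h).length + i) x = f (h.length + (i+1)) x := by
          intro i _
          congr 1
          rw [List.length_cons]
          omega
        rw [Finset.sum_congr rfl hc, Nat.add_zero]
        exact add_comm _ _
    have hlog1 : Real.log (Fintype.card X : ℝ) = 0 := by
      rw [← hcard]; norm_num
    rw [hEV T []]
    simp only [List.length_nil, zero_add, hlog1]
    simp
  · -- K ≥ 2
    have hlnK : 0 < Real.log (Fintype.card X : ℝ) := by
      apply Real.log_pos; exact_mod_cast hcard
    set A : ℝ := (Fintype.card X : ℝ) * Real.log (Fintype.card X) with hA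
    have hApos : 0 < A := by positivity
    set B : ℝ := (Real.exp 1 - 1) * T with hB
    have hBpos : 0 < B := by positivity
    by_cases hs : 1 ≤ Real.sqrt (A / B)
    · -- trivial case : γ = 1
      have hAB : B ≤ A := by
        by_contra hcon
        push_neg at hcon
        have h1 : A / B < 1 := by rw [div_lt_one hBpos]; linarith
        have := Real.sqrt_lt_sqrt (by positivity) h1
        rw [Real.sqrt_one] at this
        linarith
      have hEV0 : 0 ≤ exp3EV f γ T [] := exp3EV_nonneg f γ hf hγ0 hγ1 T []
      have hRHS : (T:ℝ) ≤ 2 * Real.sqrt (Real.exp 1 - 1) *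
          Real.sqrt ((T : ℝ) * (Fintype.card X : ℝ) * Real.log (Fintype.card X)) := by
        have h1 : (T:ℝ) * (Fintype.card X : ℝ) * Real.log (Fintype.card X) = T * A := by
          rw [hA]; ring
        have h2 : (Real.exp 1 - 1) * T * T ≤ T * A := by
          calc (Real.exp 1 - 1) * T * T = B * T := by rw [hB]
            _ ≤ A * T := by nlinarith
            _ = T * A := by ring
        have h3 : Real.sqrt ((Real.exp 1 - 1) * T * T) ≤ Real.sqrt (T * A) :=
          Real.sqrt_le_sqrt h2
        have h4 : Real.sqrt ((Real.exp 1 - 1) * T * T) =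
            Real.sqrt (Real.exp 1 - 1) * T := by
          rw [mul_assoc, Real.sqrt_mul he1.le, Real.sqrt_mul_self hT'.le]
        have h5 : (1:ℝ) ≤ Real.sqrt (Real.exp 1 - 1) := by
          have h := Real.sqrt_le_sqrt (show (1:ℝ) ≤ Real.exp 1 - 1 by
            nlinarith [Real.exp_one_gt_d9])
          rwa [Real.sqrt_one] at h
        have h6 : (1:ℝ) ≤ Real.sqrt (Real.exp 1 - 1) * Real.sqrt (Real.exp 1 - 1) := by
          nlinarith
        calc (T:ℝ) ≤ 2 * (Real.sqrt (Real.exp 1 - 1) * (Real.sqrt (Real.exp 1 - 1) * T)) := by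
              nlinarith [mul_le_mul_of_nonneg_right h6 hT'.le]
          _ = 2 * Real.sqrt (Real.exp 1 - 1) * Real.sqrt ((Real.exp 1 - 1) * T * T) := by
              rw [h4]; ring
          _ ≤ 2 * Real.sqrt (Real.exp 1 - 1) * Real.sqrt (T * A) := by
              have : (0:ℝ) ≤ 2 * Real.sqrt (Real.exp 1 - 1) := by positivity
              nlinarith [h3]
          _ = _ := by rw [h1]
      linarith
    · -- main case : γ = sqrt(A/B) < 1
      push_neg at hs
      have hγeq : γ = Real.sqrt (A / B) := by
        rw [hγ, hA, hB]
        rw [min_eq_right]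
        rw [← hA, ← hB]
        exact hs.le
      have hγpos : 0 < γ := by rw [hγeq]; positivity
      have hγlt1 : γ < 1 := by rw [hγeq]; exact hs
      have h1γ : 0 < 1 - γ := by linarith
      -- Lemma A at []
      have hAeq := exp3_lemmaA f γ hγpos hγlt1.le x T []
      have hw0 : exp3w f γ [] x = 1 := rfl
      rw [hw0, Real.log_one, zero_add] at hAeq
      simp only [List.length_nil, zero_add] at hAeq
      -- mono
      have hmono : exp3Ex f γ T [] (fun h' => Real.log (exp3w f γ h' x)) ≤
          exp3Ex f γ T [] (fun h' => Real.log (∑ x' : X, exp3w f γ h' x')) := by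
        apply exp3Ex_mono f γ hγpos.le hγlt1.le
        intro h'
        apply Real.log_le_log (exp3w_pos f γ h' x)
        exact Finset.single_le_sum (fun x' _ => (exp3w_pos f γ h' x').le) (Finset.mem_univ x)
      -- Lemma B at []
      have hBeq := exp3_lemmaB f γ hγpos hγlt1 hf T []
      have hWnil : (∑ x' : X, exp3w f γ [] x') = (Fintype.card X : ℝ) := by
        simp [exp3w]
      rw [hWnil] at hBeq
      set S := ∑ t ∈ Finset.range T, f t x with hSdef
      set EV := exp3EV f γ T [] with hEVdef
      set K : ℝ := (Fintype.card X : ℝ) with hKdef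
      set L : ℝ := Real.log (Fintype.card X : ℝ) with hL
      have hstar : γ / K * S ≤ L + γ / (K * (1 - γ)) * EV +
          T * ((Real.exp 1 - 2) * γ ^ 2 / (K * (1 - γ))) := by
        calc γ / K * S = exp3Ex f γ T [] (fun h' => Real.log (exp3w f γ h' x)) := hAeq.symm
          _ ≤ exp3Ex f γ T [] (fun h' => Real.log (∑ x' : X, exp3w f γ h' x')) := hmono
          _ ≤ _ := hBeq
      -- multiply through by K(1-γ)/γ
      have hkey2 : (1 - γ) * S ≤ K * (1 - γ) * L / γ + EV + (Real.exp 1 - 2) * γ * T := by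
        have hc : (0:ℝ) ≤ K * (1 - γ) / γ := by positivity
        have hmul := mul_le_mul_of_nonneg_left hstar hc
        have e1 : K * (1 - γ) / γ * (γ / K * S) = (1 - γ) * S := by
          field_simp
        have e2 : K * (1 - γ) / γ * (L + γ / (K * (1 - γ)) * EV +
            T * ((Real.exp 1 - 2) * γ ^ 2 / (K * (1 - γ)))) =
            K * (1 - γ) * L / γ + EV + (Real.exp 1 - 2) * γ * T := by
          field_simp
        rw [e1, e2] at hmul
        exact hmul
      have hKL : K * (1 - γ) * L / γ = K * L / γ - K * L := by
        field_simp
      have hbound : S - EV ≤ (Real.exp 1 - 1) * γ * T + K * L / γ := by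
        have hγS : γ * S ≤ γ * T := by
          apply mul_le_mul_of_nonneg_left hS hγpos.le
        have hKL0 : 0 ≤ K * L := by positivity
        rw [hKL] at hkey2
        nlinarith
      -- arithmetics with the chosen γ
      have hγ2 : γ ^ 2 = A / B := by
        rw [hγeq]; exact Real.sq_sqrt (div_nonneg hApos.le hBpos.le)
      have hA2 : A = γ ^ 2 * B := by rw [hγ2, div_mul_cancel₀ _ hBpos.ne']
      have hAg : A / γ = γ * B := by
        rw [hA2]; field_simp
      have hγB : γ * B = Real.sqrt (Real.exp 1 - 1) * Real.sqrt ((T:ℝ) * K * L) := by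
        have h1 : γ * B = Real.sqrt (A / B) * Real.sqrt (B ^ 2) := by
          rw [hγeq, Real.sqrt_sq hBpos.le]
        rw [h1, ← Real.sqrt_mul (by positivity)]
        rw [show A / B * B ^ 2 = (Real.exp 1 - 1) * ((T:ℝ) * K * L) by
          rw [hA, hB]; field_simp]
        rw [Real.sqrt_mul he1.le]
      calc S - EV ≤ (Real.exp 1 - 1) * γ * T + K * L / γ := hbound
        _ = γ * B + A / γ := by rw [hB, hA]; ring
        _ = 2 * (γ * B) := by rw [hAg]; ring
        _ = 2 * Real.sqrt (Real.exp 1 - 1) * Real.sqrt ((T:ℝ) * K * L) := by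
            rw [hγB]; ring
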